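/- Let (Ω, μ) be a probability space, let Y0, Y1 : Ω → ℝ be integrable random variables (the potential outcomes), and let T : Ω → ℝ be a random variable taking only the values 0 and 1 (the treatment indicator) such that T is independent of the pair (Y0, Y1) and p := μ{T = 1} satisfies 0 < p < 1. Define the observed outcome Y_obs = T·Y1 + (1−T)·Y0 and the class-transformed target Z = Y_obs·(T − p)/(p·(1−p)). Then E[Z] = E[Y1] − E[Y0]; that is, the expectation of the class-transformed target equals the average uplift. -/

import Mathlib

open MeasureTheory ProbabilityTheory

/-- The expectation of the class-transformed target `Z = Y_obs * (T - p) / (p * (1 - p))`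
equals the average uplift `E[Y1] - E[Y0]`, for a binary treatment `T` independent of the
pair of potential outcomes `(Y0, Y1)` with `p = μ {T = 1}` and `0 < p < 1`. -/
theorem class_transformed_target_expectation
    {Ω : Type*} [MeasurableSpace Ω] (μ : Measure Ω) [IsProbabilityMeasure μ]
    (Y0 Y1 T : Ω → ℝ)
    (hY0 : Integrable Y0 μ) (hY1 : Integrable Y1 μ)
    (hT : ∀ ω, T ω = 0 ∨ T ω = 1)
    (hTmeas : Measurable T)
    (hindep : IndepFun T (fun ω => (Y0 ω, Y1 ω)) μ)
    (p : ℝ) (hp : p = (μ {ω | T ω = 1}).toReal)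
    (hp0 : 0 < p) (hp1 : p < 1) :
    (∫ ω, ((T ω * Y1 ω + (1 - T ω) * Y0 ω) * (T ω - p) / (p * (1 - p))) ∂μ)
      = (∫ ω, Y1 ω ∂μ) - (∫ ω, Y0 ω ∂μ) := by
  have hpne : p ≠ 0 := ne_of_gt hp0
  have hp1ne : (1 : ℝ) - p ≠ 0 := by linarith
  -- T is the indicator of {T = 1}
  have hTeq : T = Set.indicator {ω | T ω = 1} (fun _ => (1 : ℝ)) := by
    funext ω
    rcases hT ω with h | h <;> simp [Set.indicator, h]
  have hsm : MeasurableSet {ω | T ω = 1} := hTmeas (measurableSet_singleton 1)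
  have hTint : Integrable T μ := by
    rw [hTeq]
    exact (integrable_indicator_iff hsm).2 integrableOn_const
  have hET : ∫ ω, T ω ∂μ = p := by
    rw [hp, show (fun ω => T ω) = T from rfl, hTeq, integral_indicator_const _ hsm]
    simp [Measure.real]
  -- independence consequences
  have hIT1 : IndepFun T Y1 μ :=
    hindep.comp measurable_id measurable_snd
  have hIT0 : IndepFun (fun ω => 1 - T ω) Y0 μ :=
    hindep.comp (measurable_const.sub measurable_id) measurable_fst
  have h1Tint : Integrable (fun ω => 1 - T ω) μ := (integrable_const (1:ℝ)).sub hTint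
  have hInt1 : Integrable (fun ω => T ω * Y1 ω) μ := hIT1.integrable_mul hTint hY1
  have hInt0 : Integrable (fun ω => (1 - T ω) * Y0 ω) μ := hIT0.integrable_mul h1Tint hY0
  have hE1 : ∫ ω, T ω * Y1 ω ∂μ = p * ∫ ω, Y1 ω ∂μ := by
    have := hIT1.integral_mul_eq_mul_integral hTint.aestronglyMeasurable hY1.aestronglyMeasurable
    simpa [hET, Pi.mul_apply] using this
  have hE0 : ∫ ω, (1 - T ω) * Y0 ω ∂μ = (1 - p) * ∫ ω, Y0 ω ∂μ := by
    have h := hIT0.integral_mul_eq_mul_integral h1Tint.aestronglyMeasurable hY0.aestronglyMeasurable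
    have hE1T : ∫ ω, (1 - T ω) ∂μ = 1 - p := by
      rw [integral_sub (integrable_const 1) hTint, hET]
      simp
    simpa [hE1T, Pi.mul_apply] using h
  -- rewrite the integrand
  have hfun : ∀ ω, (T ω * Y1 ω + (1 - T ω) * Y0 ω) * (T ω - p) / (p * (1 - p))
      = (1 / p) * (T ω * Y1 ω) - (1 / (1 - p)) * ((1 - T ω) * Y0 ω) := by
    intro ω
    rcases hT ω with h | h <;> rw [h] <;> field_simp <;> ring
  rw [integral_congr_ae (Filter.Eventually.of_forall hfun),
    integral_sub (hInt1.const_mul _) (hInt0.const_mul _),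
    integral_const_mul, integral_const_mul, hE1, hE0]
  field_simp
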